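/- Let {P_θ : θ ∈ Θ} be Markov kernels on a Polish space X and θ_n(ω) a Θ-valued random sequence. Assume (a) for every bounded continuous f, the family {P_θ f : θ ∈ Θ} is equicontinuous, and (b) there exists θ_⋆ and for each x a ℙ-full set Ω_x on which P_{θ_n(ω)}(x,·) converges weakly to P_{θ_⋆}(x,·). Then there exists a single ℙ-full set Ω_⋆ such that for all ω ∈ Ω_⋆, all x ∈ X and all k ≥ 1, the measures P_{θ_n(ω)}^k(x,·) converge weakly to P_{θ_⋆}^k(x,·). -/

import Mathlib

open MeasureTheory ProbabilityTheory Filter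
open scoped ProbabilityTheory

section AuxLemmas

open Set
open scoped ENNReal NNReal Topology

lemma integrable_of_abs_le {X : Type*} [MeasurableSpace X] {μ : Measure X} [IsFiniteMeasure μ]
    {f : X → ℝ} (hm : AEStronglyMeasurable f μ) {C : ℝ} (hb : ∀ x, |f x| ≤ C) :
    Integrable f μ :=
  (integrable_const C).mono' hm (ae_of_all _ fun x => by
    simpa [Real.norm_eq_abs] using hb x)

lemma abs_integral_le_of_abs_le {X : Type*} [MeasurableSpace X] {μ : Measure X}
    [IsProbabilityMeasure μ] {f : X → ℝ} (hm : AEStronglyMeasurable f μ) {C : ℝ}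
    (hb : ∀ x, |f x| ≤ C) : |∫ x, f x ∂μ| ≤ C := by
  calc |∫ x, f x ∂μ| ≤ ∫ x, |f x| ∂μ := by
        simpa [Real.norm_eq_abs] using norm_integral_le_integral_norm f (μ := μ)
    _ ≤ ∫ _, C ∂μ := integral_mono (integrable_of_abs_le hm hb).abs
        (integrable_const C) hb
    _ = C := by simp

lemma measurable_kernel_integral {X : Type*} [MeasurableSpace X] (η : Kernel X X)
    [IsSFiniteKernel η] {f : X → ℝ} (hf : StronglyMeasurable f) :
    StronglyMeasurable fun y => ∫ z, f z ∂(η y) :=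
  MeasureTheory.StronglyMeasurable.integral_kernel_prod_right
    (f := fun _ z => f z) (hf.comp_measurable measurable_snd)

lemma integral_comp_eq {X : Type*} [MeasurableSpace X] (η κ : Kernel X X)
    [IsMarkovKernel η] [IsMarkovKernel κ] (x : X) {f : X → ℝ}
    (hf : StronglyMeasurable f) {C : ℝ} (hb : ∀ y, |f y| ≤ C) :
    ∫ z, f z ∂((η ∘ₖ κ) x) = ∫ y, (∫ z, f z ∂(η y)) ∂(κ x) := by
  set g : X → ℝ := fun z => f z + C with hg
  have hgm : StronglyMeasurable g := hf.add stronglyMeasurable_const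
  have hg0 : ∀ z, 0 ≤ g z := fun z => by have := abs_le.1 (hb z); simp [hg]; linarith [this.1]
  have hgb : ∀ z, |g z| ≤ 2 * C := fun z => by
    have h1 := abs_le.1 (hb z); rw [abs_le]; constructor <;> simp [hg] <;> linarith [h1.1, h1.2]
  have hgint : ∀ (μ : Measure X) [IsProbabilityMeasure μ], Integrable g μ := fun μ _ =>
    integrable_of_abs_le hgm.aestronglyMeasurable hgb
  have hfint : ∀ (μ : Measure X) [IsProbabilityMeasure μ], Integrable f μ := fun μ _ =>
    integrable_of_abs_le hf.aestronglyMeasurable hb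
  set H : X → ℝ := fun y => ∫ z, g z ∂(η y) with hH
  have hHm : StronglyMeasurable H := measurable_kernel_integral η hgm
  have h1 : ∫⁻ z, ENNReal.ofReal (g z) ∂((η ∘ₖ κ) x)
      = ∫⁻ y, ∫⁻ z, ENNReal.ofReal (g z) ∂(η y) ∂(κ x) :=
    Kernel.lintegral_comp η κ x (ENNReal.measurable_ofReal.comp hgm.measurable)
  have h2 : ∀ y, ∫⁻ z, ENNReal.ofReal (g z) ∂(η y) = ENNReal.ofReal (H y) := fun y =>
    (ofReal_integral_eq_lintegral_ofReal (hgint _) (ae_of_all _ hg0)).symm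
  have h3 : ∫ z, g z ∂((η ∘ₖ κ) x) = (∫⁻ z, ENNReal.ofReal (g z) ∂((η ∘ₖ κ) x)).toReal :=
    integral_eq_lintegral_of_nonneg_ae (ae_of_all _ hg0) hgm.aestronglyMeasurable
  have h4 : ∫ y, H y ∂(κ x) = (∫⁻ y, ENNReal.ofReal (H y) ∂(κ x)).toReal :=
    integral_eq_lintegral_of_nonneg_ae (ae_of_all _ fun y => integral_nonneg hg0)
      hHm.aestronglyMeasurable
  have key : ∫ z, g z ∂((η ∘ₖ κ) x) = ∫ y, H y ∂(κ x) := by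
    rw [h3, h4, h1]; congr 1; exact lintegral_congr h2
  have e1 : ∫ z, g z ∂((η ∘ₖ κ) x) = (∫ z, f z ∂((η ∘ₖ κ) x)) + C := by
    rw [integral_add (hfint _) (integrable_const C)]; simp
  have e2 : ∀ y, H y = (∫ z, f z ∂(η y)) + C := fun y => by
    rw [hH]; simp only [hg]; rw [integral_add (hfint _) (integrable_const C)]; simp
  have e3 : ∫ y, H y ∂(κ x) = (∫ y, (∫ z, f z ∂(η y)) ∂(κ x)) + C := by
    simp_rw [e2]
    rw [integral_add (integrable_of_abs_le (measurable_kernel_integral η hf).aestronglyMeasurable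
      (fun y => abs_integral_le_of_abs_le hf.aestronglyMeasurable hb)) (integrable_const C)]
    simp
  rw [e1, e3] at key; linarith

lemma key_weak {X : Type*} [MetricSpace X] [TopologicalSpace.SeparableSpace X]
    [MeasurableSpace X] [BorelSpace X]
    {ι : Type*} (G : ι → X → ℝ) (hG : Equicontinuous G) {C : ℝ}
    (hGb : ∀ i x, |G i x| ≤ C)
    (φ : ℕ → ι) (istar : ι)
    (hptw : ∀ x, Tendsto (fun n => G (φ n) x) atTop (nhds (G istar x)))
    (μs : ℕ → Measure X) (hμs : ∀ n, IsProbabilityMeasure (μs n))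
    (μ : Measure X) (hμ : IsProbabilityMeasure μ)
    (hweak : ∀ f : X → ℝ, Continuous f → (∃ C', ∀ y, |f y| ≤ C') →
      Tendsto (fun n => ∫ y, f y ∂(μs n)) atTop (nhds (∫ y, f y ∂μ))) :
    Tendsto (fun n => ∫ y, G (φ n) y ∂(μs n)) atTop (nhds (∫ y, G istar y ∂μ)) := by
  haveI := hμ
  haveI : SecondCountableTopology X := UniformSpace.secondCountable_of_separable X
  rcases isEmpty_or_nonempty X with hX | hX
  · exfalso
    have h1 : μ univ = 1 := measure_univ
    rw [Set.univ_eq_empty_iff.2 hX] at h1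
    simp at h1
  set ν : ProbabilityMeasure X := ⟨μ, hμ⟩ with hνdef
  set νs : ℕ → ProbabilityMeasure X := fun n => ⟨μs n, hμs n⟩ with hνsdef
  have hν : Tendsto νs atTop (nhds ν) := by
    rw [ProbabilityMeasure.tendsto_iff_forall_integral_tendsto]
    intro f
    exact hweak f f.continuous ⟨‖f‖, fun y => by
      simpa [Real.norm_eq_abs] using f.norm_coe_le_norm y⟩
  set C' : ℝ := max C 1 with hC'
  have hC'1 : (1:ℝ) ≤ C' := le_max_right _ _
  have hC'0 : (0:ℝ) < C' := lt_of_lt_of_le one_pos hC'1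
  have hGb' : ∀ i x, |G i x| ≤ C' := fun i x => (hGb i x).trans (le_max_left _ _)
  have hGcont : ∀ i, Continuous (G i) := hG.continuous
  rw [Metric.tendsto_nhds]
  intro ε hε
  set ε₁ : ℝ := ε/8 with hε₁def
  have hε₁ : 0 < ε₁ := by positivity
  set ε₂ : ℝ := ε/(8*C') with hε₂def
  have hε₂ : 0 < ε₂ := by positivity
  have hrad : ∀ y : X, ∃ δ > 0, ∀ z ∈ Metric.ball y δ, ∀ i, dist (G i y) (G i z) < ε₁ := by
    intro y
    have h := Metric.equicontinuousAt_iff_right.mp (hG y) ε₁ hε₁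
    rw [Metric.eventually_nhds_iff_ball] at h
    obtain ⟨δ, hδ, h⟩ := h
    exact ⟨δ, hδ, fun z hz i => h z hz i⟩
  choose δ hδpos hδ using hrad
  obtain ⟨T, hTc, hTU⟩ := TopologicalSpace.isOpen_iUnion_countable
    (fun y => Metric.ball y (δ y)) (fun y => Metric.isOpen_ball)
  have hUuniv : ⋃ y, Metric.ball y (δ y) = univ :=
    eq_univ_iff_forall.mpr fun z => mem_iUnion.mpr ⟨z, Metric.mem_ball_self (hδpos z)⟩
  have hTne : T.Nonempty := by
    rcases T.eq_empty_or_nonempty with h | h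
    · exfalso
      rw [h] at hTU
      simp only [mem_empty_iff_false, iUnion_of_empty, iUnion_empty] at hTU
      rw [hUuniv] at hTU
      exact (univ_nonempty (α := X)).ne_empty hTU.symm
    · exact h
  obtain ⟨u, hu⟩ := hTc.exists_eq_range hTne
  set s : ℕ → Set X := fun j => Metric.ball (u j) (δ (u j)) with hs
  have hsU : ⋃ j, s j = univ := by
    have hb : ⋃ y ∈ T, Metric.ball y (δ y) = ⋃ j, s j := by
      rw [hu]; exact biUnion_range
    rw [← hb, hTU, hUuniv]
  have htend : Tendsto (fun N => μ (accumulate s N)) atTop (nhds (μ (⋃ j, s j))) :=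
    tendsto_measure_iUnion_accumulate
  rw [hsU, measure_univ] at htend
  set a : ℝ≥0∞ := (ENNReal.ofReal ε₂)/2 ⊓ 2⁻¹ with ha
  have ha0 : 0 < a := by
    apply lt_min
    · exact ENNReal.div_pos (ne_of_gt (ENNReal.ofReal_pos.2 hε₂)) ENNReal.ofNat_ne_top
    · simp
  have ha1 : a ≤ 1 := le_trans inf_le_right (by
    rw [ENNReal.inv_le_one]; exact one_le_two)
  have haε : a < ENNReal.ofReal ε₂ :=
    lt_of_le_of_lt inf_le_left
      (ENNReal.half_lt_self (ne_of_gt (ENNReal.ofReal_pos.2 hε₂)) ENNReal.ofReal_ne_top)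
  have h1a : (1:ℝ≥0∞) - a < 1 := ENNReal.sub_lt_self ENNReal.one_ne_top one_ne_zero ha0.ne'
  obtain ⟨N, hN⟩ := (htend.eventually (eventually_gt_nhds h1a)).exists
  set U : Set X := accumulate s N with hU
  have hUopen : IsOpen U := by
    rw [hU, accumulate_def]
    exact isOpen_biUnion fun j _ => Metric.isOpen_ball
  have hμUc : μ Uᶜ ≤ a := by
    rw [prob_compl_eq_one_sub hUopen.measurableSet, tsub_le_iff_right]
    calc (1:ℝ≥0∞) = a + (1 - a) := (add_tsub_cancel_of_le ha1).symm
      _ ≤ a + μ U := add_le_add_right hN.le _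
  have hlimsup : (atTop.limsup fun n => μs n Uᶜ) ≤ μ Uᶜ :=
    ProbabilityMeasure.limsup_measure_closed_le_of_tendsto hν (isClosed_compl_iff.mpr hUopen)
  have hev2 : ∀ᶠ n in atTop, μs n Uᶜ < ENNReal.ofReal ε₂ :=
    eventually_lt_of_limsup_lt (lt_of_le_of_lt (hlimsup.trans hμUc) haε)
  have hev1 : ∀ᶠ n in atTop,
      dist (∫ y, G istar y ∂(μs n)) (∫ y, G istar y ∂μ) < ε₁ :=
    Metric.tendsto_nhds.mp (hweak (G istar) (hGcont istar) ⟨C, fun y => hGb _ y⟩) ε₁ hε₁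
  have hev3 : ∀ᶠ n in atTop, ∀ j ∈ Finset.range (N+1),
      dist (G (φ n) (u j)) (G istar (u j)) < ε₁ :=
    (Finset.range (N+1)).eventually_all.mpr fun j _ =>
      Metric.tendsto_nhds.mp (hptw (u j)) ε₁ hε₁
  filter_upwards [hev1, hev2, hev3] with n h1 h2 h3
  haveI := hμs n
  set bnd : X → ℝ := fun z => 3*ε₁ + Uᶜ.indicator (fun _ => 2*C') z with hbnd
  have hpt : ∀ z, |G (φ n) z - G istar z| ≤ bnd z := by
    intro z
    by_cases hz : z ∈ U
    · have hzU : z ∉ Uᶜ := fun h => h hz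
      have hzm : ∃ j ≤ N, z ∈ s j := Set.mem_accumulate.mp hz
      obtain ⟨j, hjN, hjz⟩ := hzm
      have e1 : dist (G (φ n) z) (G (φ n) (u j)) < ε₁ := by
        rw [dist_comm]; exact hδ (u j) z hjz (φ n)
      have e2 : dist (G istar (u j)) (G istar z) < ε₁ := hδ (u j) z hjz istar
      have e3 := h3 j (Finset.mem_range.mpr (Nat.lt_succ_of_le hjN))
      have tri := dist_triangle4 (G (φ n) z) (G (φ n) (u j)) (G istar (u j)) (G istar z)
      have hind : Uᶜ.indicator (fun _ : X => 2*C') z = 0 := indicator_of_notMem hzU _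
      have hd : dist (G (φ n) z) (G istar z) ≤ 3*ε₁ := by linarith
      simp only [hbnd, hind, add_zero]
      rw [← Real.dist_eq]
      exact hd
    · have hb1 : |G (φ n) z - G istar z| ≤ |G (φ n) z| + |G istar z| := by
        rw [sub_eq_add_neg]
        exact (abs_add_le _ _).trans (by rw [abs_neg])
      have hind : Uᶜ.indicator (fun _ : X => 2*C') z = 2*C' :=
        indicator_of_mem (Set.mem_compl hz) _
      simp only [hbnd, hind]
      have := hGb' (φ n) z
      have := hGb' istar z
      linarith
  have hintφ : Integrable (G (φ n)) (μs n) :=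
    integrable_of_abs_le (hGcont (φ n)).aestronglyMeasurable (hGb' (φ n))
  have hints : Integrable (G istar) (μs n) :=
    integrable_of_abs_le (hGcont istar).aestronglyMeasurable (hGb' istar)
  have hintG : Integrable (fun z => G (φ n) z - G istar z) (μs n) := hintφ.sub hints
  have hUcm : MeasurableSet Uᶜ := hUopen.measurableSet.compl
  have hintbnd : Integrable bnd (μs n) :=
    (integrable_const (3*ε₁)).add ((integrable_const (2*C')).indicator hUcm)
  have hIbound : |∫ z, (G (φ n) z - G istar z) ∂(μs n)|
      ≤ 3*ε₁ + 2*C' * (μs n Uᶜ).toReal := by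
    calc |∫ z, (G (φ n) z - G istar z) ∂(μs n)|
        ≤ ∫ z, |G (φ n) z - G istar z| ∂(μs n) := by
          simpa [Real.norm_eq_abs] using
            norm_integral_le_integral_norm (fun z => G (φ n) z - G istar z) (μ := μs n)
      _ ≤ ∫ z, bnd z ∂(μs n) := integral_mono hintG.abs hintbnd hpt
      _ = 3*ε₁ + 2*C' * (μs n Uᶜ).toReal := by
          rw [hbnd]
          rw [integral_add (integrable_const _) ((integrable_const _).indicator hUcm)]
          rw [integral_const, integral_indicator_const _ hUcm]
          simp [measure_univ, mul_comm, measureReal_def]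
  have htoReal : (μs n Uᶜ).toReal < ε₂ :=
    (ENNReal.lt_ofReal_iff_toReal_lt (measure_ne_top _ _)).mp h2
  have hsplit : ∫ y, G (φ n) y ∂(μs n) - ∫ y, G istar y ∂μ
      = (∫ z, (G (φ n) z - G istar z) ∂(μs n))
        + (∫ y, G istar y ∂(μs n) - ∫ y, G istar y ∂μ) := by
    rw [integral_sub hintφ hints]; ring
  rw [Real.dist_eq, hsplit]
  have htri := abs_add_le (∫ z, (G (φ n) z - G istar z) ∂(μs n))
    (∫ y, G istar y ∂(μs n) - ∫ y, G istar y ∂μ)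
  rw [Real.dist_eq] at h1
  have hmul : 2*C' * (μs n Uᶜ).toReal < 2*C' * ε₂ :=
    mul_lt_mul_of_pos_left htoReal (by positivity)
  have hkey : 2*C'*ε₂ = ε/4 := by
    rw [hε₂def]; field_simp; ring
  have hε₁' : ε₁ = ε/8 := rfl
  linarith [htri, hIbound, hmul, h1]

end AuxLemmas

/-- The `k`-fold iterate `P^k` of a Markov kernel. -/
noncomputable def iterKernel {X : Type*} [MeasurableSpace X] (P : Kernel X X) : ℕ → Kernel X X
  | 0 => Kernel.id
  | n + 1 => P ∘ₖ iterKernel P n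

lemma iterKernel_isMarkov {X : Type*} [MeasurableSpace X] (P : Kernel X X) [IsMarkovKernel P] :
    ∀ k, IsMarkovKernel (iterKernel P k)
  | 0 => by rw [iterKernel]; infer_instance
  | k + 1 => by rw [iterKernel]; haveI := iterKernel_isMarkov P k; infer_instance

/-- Let `{P_θ}` be Markov kernels on a Polish space `X` and `θ_n(ω)` a random
parameter sequence. If (a) for every bounded continuous `f` the family
`{P_θ f : θ ∈ Θ}` is equicontinuous, and (b) for each `x` there is a full set on
which `P_{θ_n(ω)}(x,·)` converges weakly to `P_{θ⋆}(x,·)`, then there is a single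
full set `Ω⋆` on which, for every `x`, every `k ≥ 1` and every bounded continuous
`f`, `P_{θ_n(ω)}^k f(x) → P_{θ⋆}^k f(x)`. -/
theorem weak_convergence_iterated_kernels
    {X : Type*} [MetricSpace X] [TopologicalSpace.SeparableSpace X] [CompleteSpace X]
    [MeasurableSpace X] [BorelSpace X]
    {Θ : Type*} (P : Θ → Kernel X X) (hP : ∀ θ, IsMarkovKernel (P θ))
    {Ω : Type*} [MeasurableSpace Ω] (Pm : Measure Ω) [IsProbabilityMeasure Pm]
    (θp : ℕ → Ω → Θ) (θstar : Θ)
    (hequi : ∀ f : X → ℝ, Continuous f → (∃ C, ∀ x, |f x| ≤ C) →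
      Equicontinuous (fun θ : Θ => fun x : X => ∫ y, f y ∂((P θ) x)))
    (hcvg : ∀ x : X, ∀ᵐ ω ∂Pm, ∀ f : X → ℝ, Continuous f → (∃ C, ∀ y, |f y| ≤ C) →
      Tendsto (fun n => ∫ y, f y ∂((P (θp n ω)) x)) atTop
        (nhds (∫ y, f y ∂((P θstar) x)))) :
    ∀ᵐ ω ∂Pm, ∀ x : X, ∀ k : ℕ, 1 ≤ k → ∀ f : X → ℝ, Continuous f →
      (∃ C, ∀ y, |f y| ≤ C) →
      Tendsto (fun n => ∫ y, f y ∂(iterKernel (P (θp n ω)) k x)) atTop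
        (nhds (∫ y, f y ∂(iterKernel (P θstar) k x))) := by
  obtain ⟨D, hDc, hDdense⟩ := TopologicalSpace.exists_countable_dense X
  have hae : ∀ᵐ ω ∂Pm, ∀ x ∈ D, ∀ f : X → ℝ, Continuous f → (∃ C, ∀ y, |f y| ≤ C) →
      Tendsto (fun n => ∫ y, f y ∂((P (θp n ω)) x)) atTop
        (nhds (∫ y, f y ∂((P θstar) x))) :=
    (ae_ball_iff hDc).mpr fun x _ => hcvg x
  filter_upwards [hae] with ω hω
  have base : ∀ f : X → ℝ, Continuous f → (∃ C, ∀ y, |f y| ≤ C) → ∀ x : X,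
      Tendsto (fun n => ∫ y, f y ∂((P (θp n ω)) x)) atTop
        (nhds (∫ y, f y ∂((P θstar) x))) := by
    intro f hf hb
    have hEq : Equicontinuous (fun n : ℕ => fun x : X => ∫ y, f y ∂((P (θp n ω)) x)) :=
      (hequi f hf hb).comp (fun n => θp n ω)
    have hcont : Continuous (fun x : X => ∫ y, f y ∂((P θstar) x)) :=
      (hequi f hf hb).continuous θstar
    have hclosed := hEq.isClosed_setOf_tendsto (l := atTop) hcont
    intro x
    have hsub : D ⊆ {x | Tendsto (fun n => ∫ y, f y ∂((P (θp n ω)) x)) atTop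
        (nhds (∫ y, f y ∂((P θstar) x)))} := fun z hz => hω z hz f hf hb
    have hx : x ∈ closure D := by rw [hDdense.closure_eq]; trivial
    exact closure_minimal hsub hclosed hx
  have main : ∀ k : ℕ, ∀ x : X, ∀ f : X → ℝ, Continuous f → (∃ C, ∀ y, |f y| ≤ C) →
      Tendsto (fun n => ∫ y, f y ∂(iterKernel (P (θp n ω)) k x)) atTop
        (nhds (∫ y, f y ∂(iterKernel (P θstar) k x))) := by
    intro k
    induction k with
    | zero =>
      intro x f hf hb
      have hrw0 : ∀ θ : Θ, ∫ y, f y ∂(iterKernel (P θ) 0 x) = f x := fun θ => by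
        show ∫ y, f y ∂((Kernel.id : Kernel X X) x) = f x
        rw [Kernel.id_apply, integral_dirac]
      simp only [hrw0]
      exact tendsto_const_nhds
    | succ k ih =>
      intro x f hf hb
      obtain ⟨C, hb'⟩ := hb
      have hrw : ∀ θ : Θ, ∫ z, f z ∂(iterKernel (P θ) (k+1) x)
          = ∫ y, (∫ z, f z ∂((P θ) y)) ∂(iterKernel (P θ) k x) := fun θ => by
        haveI := hP θ
        haveI := iterKernel_isMarkov (P θ) k
        exact integral_comp_eq (P θ) (iterKernel (P θ) k) x hf.stronglyMeasurable hb'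
      have hbound : ∀ (θ : Θ) (y : X), |∫ z, f z ∂((P θ) y)| ≤ C := fun θ y => by
        haveI := hP θ
        exact abs_integral_le_of_abs_le hf.aestronglyMeasurable hb'
      have hmarkov : ∀ θ : Θ, ∀ n : ℕ, IsProbabilityMeasure (iterKernel (P θ) k x) := by
        intro θ n
        haveI := hP θ
        haveI := iterKernel_isMarkov (P θ) k
        infer_instance
      have hkw := key_weak (G := fun θ y => ∫ z, f z ∂((P θ) y))
        (hequi f hf ⟨C, hb'⟩) (C := C) (fun θ y => hbound θ y)
        (fun n => θp n ω) θstar (fun y => base f hf ⟨C, hb'⟩ y)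
        (fun n => iterKernel (P (θp n ω)) k x) (fun n => hmarkov _ n)
        (iterKernel (P θstar) k x) (hmarkov θstar 0)
        (fun g hg hbg => ih x g hg hbg)
      rw [hrw θstar]
      exact hkw.congr fun n => (hrw (θp n ω)).symm
  intro x k _ f hf hb
  exact main k x f hf hb
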